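/- Under the recursion π_k = γ_k·(s + (1/c_k)·Σ_{j=1}^{k-1} c_j (s - π_j)) + (1-γ_k)·α with γ_k ∈ [0,1] and c_k > 0, the capacity-weighted average π^W = (Σ_{k=1}^K c_k π_k)/(Σ_{k=1}^K c_k) satisfies π^W = s + (α - s)·γ̄ where γ̄ = (Σ_{j=1}^K c_j ∏_{i=j}^K (1 - γ_i))/(Σ_{j=1}^K c_j), and γ̄ ∈ [0,1]. -/

import Mathlib

/-- The capacity-weighted average satisfies
`π^W = s + (α - s)·γ̄` where `γ̄ = (Σ_j c_j ∏_{i=j}^K (1-γ_i))/(Σ_j c_j) ∈ [0,1]`. -/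
theorem stmt3 (K : ℕ) (hK : 1 ≤ K) (c γ p : ℕ → ℝ) (s α : ℝ)
    (hs : s ∈ Set.Icc (0:ℝ) 1) (hα : α ∈ Set.Icc (0:ℝ) 1)
    (hc : ∀ k ∈ Finset.Icc 1 K, 0 < c k)
    (hγ : ∀ k ∈ Finset.Icc 1 K, γ k ∈ Set.Icc (0:ℝ) 1)
    (hrec : ∀ k ∈ Finset.Icc 1 K,
      p k = γ k * (s + (1 / c k) * ∑ j ∈ Finset.Ico 1 k, c j * (s - p j)) + (1 - γ k) * α) :
    (∑ k ∈ Finset.Icc 1 K, c k * p k) / (∑ k ∈ Finset.Icc 1 K, c k)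
      = s + (α - s) *
        ((∑ j ∈ Finset.Icc 1 K, c j * ∏ i ∈ Finset.Icc j K, (1 - γ i)) /
          (∑ j ∈ Finset.Icc 1 K, c j)) ∧
    (∑ j ∈ Finset.Icc 1 K, c j * ∏ i ∈ Finset.Icc j K, (1 - γ i)) /
        (∑ j ∈ Finset.Icc 1 K, c j) ∈ Set.Icc (0:ℝ) 1 := by
  have key : ∀ k, k ≤ K →
      ∑ j ∈ Finset.Icc 1 k, c j * (s - p j)
        = (s - α) * ∑ j ∈ Finset.Icc 1 k, c j * ∏ i ∈ Finset.Icc j k, (1 - γ i) := by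
    intro k
    induction k with
    | zero => intro _; simp
    | succ n ih =>
      intro hn
      have hn' : n ≤ K := Nat.le_of_succ_le hn
      have hmem : n + 1 ∈ Finset.Icc 1 K := by
        simp only [Finset.mem_Icc]; omega
      have hcpos := hc (n + 1) hmem
      have hcne : c (n + 1) ≠ 0 := ne_of_gt hcpos
      have hrec' := hrec (n + 1) hmem
      have hIco : Finset.Ico 1 (n + 1) = Finset.Icc 1 n := Finset.Ico_add_one_right_eq_Icc 1 n
      rw [hIco] at hrec'
      have hS := ih hn'
      rw [Finset.sum_Icc_succ_top (by omega : 1 ≤ n + 1),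
          Finset.sum_Icc_succ_top (by omega : 1 ≤ n + 1)]
      have hprod : ∀ j ∈ Finset.Icc 1 n,
          c j * ∏ i ∈ Finset.Icc j (n + 1), (1 - γ i)
            = (c j * ∏ i ∈ Finset.Icc j n, (1 - γ i)) * (1 - γ (n + 1)) := by
        intro j hj
        have hj' : j ≤ n + 1 := by
          have := (Finset.mem_Icc.mp hj).2; omega
        rw [Finset.prod_Icc_succ_top hj']
        ring
      rw [Finset.sum_congr rfl hprod, ← Finset.sum_mul, Finset.Icc_self,
          Finset.prod_singleton, hS, hrec', hS]
      field_simp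
      ring
  have hCpos : 0 < ∑ k ∈ Finset.Icc 1 K, c k :=
    Finset.sum_pos hc ⟨1, Finset.mem_Icc.mpr ⟨le_refl 1, hK⟩⟩
  have hCne : (∑ k ∈ Finset.Icc 1 K, c k) ≠ 0 := ne_of_gt hCpos
  have hS := key K le_rfl
  have hsum : ∑ k ∈ Finset.Icc 1 K, c k * p k
      = s * (∑ k ∈ Finset.Icc 1 K, c k)
        + (α - s) * ∑ j ∈ Finset.Icc 1 K, c j * ∏ i ∈ Finset.Icc j K, (1 - γ i) := by
    have : ∑ j ∈ Finset.Icc 1 K, c j * (s - p j)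
        = s * (∑ k ∈ Finset.Icc 1 K, c k) - ∑ k ∈ Finset.Icc 1 K, c k * p k := by
      rw [Finset.mul_sum, ← Finset.sum_sub_distrib]
      exact Finset.sum_congr rfl fun j _ => by ring
    rw [this] at hS
    linarith
  constructor
  · rw [hsum]
    field_simp
  · have hQ0 : 0 ≤ ∑ j ∈ Finset.Icc 1 K, c j * ∏ i ∈ Finset.Icc j K, (1 - γ i) := by
      apply Finset.sum_nonneg
      intro j hj
      apply mul_nonneg (le_of_lt (hc j hj))
      apply Finset.prod_nonneg
      intro i hi
      have him : i ∈ Finset.Icc 1 K := by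
        have h1 := Finset.mem_Icc.mp hi
        have h2 := Finset.mem_Icc.mp hj
        exact Finset.mem_Icc.mpr ⟨le_trans h2.1 h1.1, h1.2⟩
      have := hγ i him
      linarith [this.2]
    have hQle : ∑ j ∈ Finset.Icc 1 K, c j * ∏ i ∈ Finset.Icc j K, (1 - γ i)
        ≤ ∑ j ∈ Finset.Icc 1 K, c j := by
      apply Finset.sum_le_sum
      intro j hj
      have hcj := hc j hj
      have hle : ∏ i ∈ Finset.Icc j K, (1 - γ i) ≤ 1 := by
        apply Finset.prod_le_one
        · intro i hi
          have him : i ∈ Finset.Icc 1 K := by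
            have h1 := Finset.mem_Icc.mp hi
            have h2 := Finset.mem_Icc.mp hj
            exact Finset.mem_Icc.mpr ⟨le_trans h2.1 h1.1, h1.2⟩
          linarith [(hγ i him).2]
        · intro i hi
          have him : i ∈ Finset.Icc 1 K := by
            have h1 := Finset.mem_Icc.mp hi
            have h2 := Finset.mem_Icc.mp hj
            exact Finset.mem_Icc.mpr ⟨le_trans h2.1 h1.1, h1.2⟩
          linarith [(hγ i him).1]
      nlinarith
    constructor
    · exact div_nonneg hQ0 (le_of_lt hCpos)
    · rw [div_le_one hCpos]; exact hQle
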